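/- For a > 1 and b < 0, the second derivative M″ of the Melnikov function has a unique zero h₂ on (0,∞); moreover h₂ ∈ (0, (a²-1)/2), M″(h) > 0 for 0 < h < h₂, and M″(h) < 0 for h > h₂. -/

import Mathlib

open Real

/-- The Melnikov function `M(h; a, b)` of the discontinuous SD oscillator. -/
noncomputable def Mel (a b h : ℝ) : ℝ :=
  -(Real.pi / 4) * (a + 1) ^ 2 * (5 * a ^ 2 + 10 * a + 4 * b + 5)
    - (15 * a ^ 2 + 4 * b + 5) * Real.sqrt h / Real.sqrt 2
    - (3 * a ^ 2 + 6 * a + 2 * b + 3) * Real.pi * h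
    - (13 * Real.sqrt 2 / 3) * (h * Real.sqrt h)
    - Real.pi * h ^ 2
    - (1 / 4) * (a ^ 2 - 2 * a + 2 * h + 1) * (5 * a ^ 2 - 10 * a + 4 * b + 2 * h + 5)
        * Real.arctan (Real.sqrt (2 * h) / (a - 1))
    + (1 / 4) * (a ^ 2 + 2 * a + 2 * h + 1) * (5 * a ^ 2 + 10 * a + 4 * b + 2 * h + 5)
        * Real.arctan (Real.sqrt (2 * h) / (a + 1))

noncomputable def S (h : ℝ) : ℝ := Real.sqrt (2 * h)

lemma S_pos {h : ℝ} (hh : 0 < h) : 0 < S h := Real.sqrt_pos.2 (by linarith)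

lemma S_sq {h : ℝ} (hh : 0 < h) : S h ^ 2 = 2 * h := Real.sq_sqrt (by linarith)

lemma hasDerivAt_S {h : ℝ} (hh : 0 < h) : HasDerivAt S (1 / S h) h := by
  have h2 : HasDerivAt (fun x : ℝ => 2 * x) 2 h := by
    simpa using (hasDerivAt_id h).const_mul 2
  have := (Real.hasDerivAt_sqrt (by positivity : 2 * h ≠ 0)).comp h h2
  refine this.congr_deriv ?_
  have := S_pos hh
  unfold S at *
  field_simp

lemma hasDerivAt_arct {c h : ℝ} (hc : 0 < c) (hh : 0 < h) :
    HasDerivAt (fun x => Real.arctan (S x / c)) (c / (S h * (c ^ 2 + 2 * h))) h := by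
  have h1 : HasDerivAt (fun x => S x / c) (1 / S h / c) h := (hasDerivAt_S hh).div_const c
  have := (Real.hasDerivAt_arctan (S h / c)).comp h h1
  refine this.congr_deriv ?_
  have hs := S_pos hh
  have hsq := S_sq hh
  field_simp
  rw [hsq]

/-- `Mel` rewritten using `S h = √(2h)` only. -/
noncomputable def Mel2 (a b h : ℝ) : ℝ :=
  -(Real.pi / 4) * (a + 1) ^ 2 * (5 * a ^ 2 + 10 * a + 4 * b + 5)
    - (15 * a ^ 2 + 4 * b + 5) * S h / 2
    - (3 * a ^ 2 + 6 * a + 2 * b + 3) * Real.pi * h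
    - 13 / 3 * (h * S h)
    - Real.pi * h ^ 2
    - 1 / 4 * (a ^ 2 - 2 * a + 2 * h + 1) * (5 * a ^ 2 - 10 * a + 4 * b + 2 * h + 5)
        * Real.arctan (S h / (a - 1))
    + 1 / 4 * (a ^ 2 + 2 * a + 2 * h + 1) * (5 * a ^ 2 + 10 * a + 4 * b + 2 * h + 5)
        * Real.arctan (S h / (a + 1))

lemma Mel_eq_Mel2 (a b : ℝ) : Mel a b = Mel2 a b := by
  funext h
  unfold Mel Mel2 S
  rcases le_or_gt 0 h with h0 | h0
  · have hm : Real.sqrt (2 * h) = Real.sqrt 2 * Real.sqrt h := Real.sqrt_mul (by norm_num) h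
    have hr2 : Real.sqrt 2 * Real.sqrt 2 = 2 := Real.mul_self_sqrt (by norm_num)
    have hrpos : (0:ℝ) < Real.sqrt 2 := by positivity
    rw [hm]
    have e1 : (15 * a ^ 2 + 4 * b + 5) * Real.sqrt h / Real.sqrt 2
        = (15 * a ^ 2 + 4 * b + 5) * (Real.sqrt 2 * Real.sqrt h) / 2 := by
      rw [div_eq_div_iff (ne_of_gt hrpos) two_ne_zero]
      linear_combination (-(15 * a ^ 2 + 4 * b + 5) * Real.sqrt h) * hr2
    rw [e1]
    have e2 : 13 * Real.sqrt 2 / 3 * (h * Real.sqrt h)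
        = 13 / 3 * (h * (Real.sqrt 2 * Real.sqrt h)) := by ring
    rw [e2]
  · have h1 : Real.sqrt h = 0 := Real.sqrt_eq_zero_of_nonpos h0.le
    have h2 : Real.sqrt (2 * h) = 0 := Real.sqrt_eq_zero_of_nonpos (by linarith)
    rw [h1, h2]
    ring

/-- The first derivative of `Mel` on `(0,∞)`. -/
noncomputable def M1 (a b h : ℝ) : ℝ :=
  -(3 * (a + 1) ^ 2 + 2 * b) * Real.pi - 6 * S h - 2 * Real.pi * h
    - (3 * (a - 1) ^ 2 + 2 * b + 2 * h) * Real.arctan (S h / (a - 1))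
    + (3 * (a + 1) ^ 2 + 2 * b + 2 * h) * Real.arctan (S h / (a + 1))

/-- The second derivative of `Mel` on `(0,∞)`. -/
noncomputable def M2 (a b h : ℝ) : ℝ :=
  2 * (Real.arctan (S h / (a + 1)) - Real.arctan (S h / (a - 1)) - Real.pi)
    + 4 * (b - 2 * h) * (2 * h - (a ^ 2 - 1))
      / (S h * ((a + 1) ^ 2 + 2 * h) * ((a - 1) ^ 2 + 2 * h))

/-- The third derivative of `Mel` on `(0,∞)` (arctan-free). -/
noncomputable def M3 (a b h : ℝ) : ℝ :=
  (2 * (a + 1) / ((a + 1) ^ 2 + 2 * h) - 2 * (a - 1) / ((a - 1) ^ 2 + 2 * h)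
    + 8 * (b + (a ^ 2 - 1) - 4 * h) / (((a + 1) ^ 2 + 2 * h) * ((a - 1) ^ 2 + 2 * h))
    - 8 * (b - 2 * h) * (2 * h - (a ^ 2 - 1)) * (((a + 1) ^ 2 + 2 * h) + ((a - 1) ^ 2 + 2 * h))
        / (((a + 1) ^ 2 + 2 * h) * ((a - 1) ^ 2 + 2 * h)) ^ 2
    - 2 * (b - 2 * h) * (2 * h - (a ^ 2 - 1))
        / (h * ((a + 1) ^ 2 + 2 * h) * ((a - 1) ^ 2 + 2 * h))) / S h

lemma hasDerivAt_Mel2 {a b h : ℝ} (ha : 1 < a) (hh : 0 < h) :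
    HasDerivAt (Mel2 a b) (M1 a b h) h := by
  have ham : (0:ℝ) < a - 1 := by linarith
  have hap : (0:ℝ) < a + 1 := by linarith
  have hs := hasDerivAt_S hh
  have hsp := S_pos hh
  have hsq := S_sq hh
  have hAm := hasDerivAt_arct ham hh
  have hAp := hasDerivAt_arct hap hh
  have lin1 :=
    (((hasDerivAt_id' (x:=h)).const_mul 2).const_add (a ^ 2 - 2 * a)).add_const 1
  have lin2 :=
    (((hasDerivAt_id' (x:=h)).const_mul 2).const_add (5 * a ^ 2 - 10 * a + 4 * b)).add_const 5
  have lin3 :=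
    (((hasDerivAt_id' (x:=h)).const_mul 2).const_add (a ^ 2 + 2 * a)).add_const 1
  have lin4 :=
    (((hasDerivAt_id' (x:=h)).const_mul 2).const_add (5 * a ^ 2 + 10 * a + 4 * b)).add_const 5
  have t1 := hasDerivAt_const h
      (-(Real.pi / 4) * (a + 1) ^ 2 * (5 * a ^ 2 + 10 * a + 4 * b + 5))
  have t2 := (hs.const_mul (15 * a ^ 2 + 4 * b + 5)).div_const 2
  have t3 := (hasDerivAt_id' (x:=h)).const_mul ((3 * a ^ 2 + 6 * a + 2 * b + 3) * Real.pi)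
  have t4 := ((hasDerivAt_id' (x:=h)).mul hs).const_mul (13 / 3)
  have t5 := (hasDerivAt_pow 2 h).const_mul Real.pi
  have t6 := ((lin1.const_mul (1 / 4)).mul lin2).mul hAm
  have t7 := ((lin3.const_mul (1 / 4)).mul lin4).mul hAp
  have BIG := ((((((t1.sub t2).sub t3).sub t4).sub t5).sub t6).add t7)
  refine BIG.congr_deriv ?_
  unfold M1
  simp only [Pi.mul_apply, Pi.sub_apply, Pi.add_apply, Pi.div_apply]
  have h2 : h = S h ^ 2 / 2 := by linarith
  set s := S h with hsdef
  rw [h2]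
  have hsne : s ≠ 0 := ne_of_gt hsp
  field_simp
  ring


lemma hasDerivAt_M1 {a b h : ℝ} (ha : 1 < a) (hh : 0 < h) :
    HasDerivAt (M1 a b) (M2 a b h) h := by
  have ham : (0:ℝ) < a - 1 := by linarith
  have hap : (0:ℝ) < a + 1 := by linarith
  have hs := hasDerivAt_S hh
  have hsp := S_pos hh
  have hsq := S_sq hh
  have hAm := hasDerivAt_arct ham hh
  have hAp := hasDerivAt_arct hap hh
  have linm := (((hasDerivAt_id' (x:=h)).const_mul 2).const_add (3 * (a - 1) ^ 2 + 2 * b))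
  have linp := (((hasDerivAt_id' (x:=h)).const_mul 2).const_add (3 * (a + 1) ^ 2 + 2 * b))
  have t1 := hasDerivAt_const h (-(3 * (a + 1) ^ 2 + 2 * b) * Real.pi)
  have t2 := hs.const_mul 6
  have t3 := (hasDerivAt_id' (x:=h)).const_mul (2 * Real.pi)
  have t4 := linm.mul hAm
  have t5 := linp.mul hAp
  have BIG := ((((t1.sub t2).sub t3).sub t4).add t5)
  refine BIG.congr_deriv ?_
  unfold M2
  have h2 : h = S h ^ 2 / 2 := by linarith
  set s := S h with hsdef
  rw [h2]
  have hsne : s ≠ 0 := ne_of_gt hsp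
  have hd1 : (a - 1) ^ 2 + 2 * (s ^ 2 / 2) ≠ 0 := by positivity
  have hd2 : (a + 1) ^ 2 + 2 * (s ^ 2 / 2) ≠ 0 := by positivity
  field_simp
  ring


lemma hasDerivAt_M2 {a b h : ℝ} (ha : 1 < a) (hh : 0 < h) :
    HasDerivAt (M2 a b) (M3 a b h) h := by
  have ham : (0:ℝ) < a - 1 := by linarith
  have hap : (0:ℝ) < a + 1 := by linarith
  have hs := hasDerivAt_S hh
  have hsp := S_pos hh
  have hsq := S_sq hh
  have hAm := hasDerivAt_arct ham hh
  have hAp := hasDerivAt_arct hap hh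
  have hPp := (((hasDerivAt_id' (x:=h)).const_mul 2).const_add ((a + 1) ^ 2))
  have hPm := (((hasDerivAt_id' (x:=h)).const_mul 2).const_add ((a - 1) ^ 2))
  have hnum := ((((hasDerivAt_id' (x:=h)).const_mul 2).const_sub b).const_mul 4).mul
      (((hasDerivAt_id' (x:=h)).const_mul 2).sub_const (a ^ 2 - 1))
  have hden := (hs.mul hPp).mul hPm
  have hdenne : S h * ((a + 1) ^ 2 + 2 * h) * ((a - 1) ^ 2 + 2 * h) ≠ 0 := by
    have := S_pos hh
    positivity
  have t1 := ((hAp.sub hAm).sub_const Real.pi).const_mul 2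
  have t2 := hnum.div hden hdenne
  have BIG := t1.add t2
  refine BIG.congr_deriv ?_
  unfold M3
  simp only [Pi.mul_apply, Pi.sub_apply, Pi.add_apply, Pi.div_apply]
  have h2 : h = S h ^ 2 / 2 := by linarith
  set s := S h with hsdef
  rw [h2]
  have hsne : s ≠ 0 := ne_of_gt hsp
  have hd1 : (a - 1) ^ 2 + 2 * (s ^ 2 / 2) ≠ 0 := by positivity
  have hd2 : (a + 1) ^ 2 + 2 * (s ^ 2 / 2) ≠ 0 := by positivity
  field_simp
  ring


lemma deriv2_Mel_eq {a b h : ℝ} (ha : 1 < a) (hh : 0 < h) :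
    deriv (deriv (Mel a b)) h = M2 a b h := by
  have hev : deriv (Mel a b) =ᶠ[nhds h] M1 a b := by
    filter_upwards [isOpen_Ioi.mem_nhds (show h ∈ Set.Ioi (0:ℝ) from hh)] with x hx
    rw [Mel_eq_Mel2]
    exact (hasDerivAt_Mel2 ha hx).deriv
  rw [hev.deriv_eq, (hasDerivAt_M1 ha hh).deriv]

lemma M3_neg {a b h : ℝ} (ha : 1 < a) (hb : b < 0) (hh : 0 < h)
    (hhc : h ≤ (a ^ 2 - 1) / 2) : M3 a b h < 0 := by
  have hsp := S_pos hh
  have hPp : (0:ℝ) < (a + 1) ^ 2 + 2 * h := by positivity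
  have hPm : (0:ℝ) < (a - 1) ^ 2 + 2 * h := by positivity
  unfold M3
  apply div_neg_of_neg_of_pos _ hsp
  have key : 2 * (a + 1) / ((a + 1) ^ 2 + 2 * h) - 2 * (a - 1) / ((a - 1) ^ 2 + 2 * h)
      + 8 * (b + (a ^ 2 - 1) - 4 * h) / (((a + 1) ^ 2 + 2 * h) * ((a - 1) ^ 2 + 2 * h))
      - 8 * (b - 2 * h) * (2 * h - (a ^ 2 - 1)) * (((a + 1) ^ 2 + 2 * h) + ((a - 1) ^ 2 + 2 * h))
          / (((a + 1) ^ 2 + 2 * h) * ((a - 1) ^ 2 + 2 * h)) ^ 2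
      - 2 * (b - 2 * h) * (2 * h - (a ^ 2 - 1))
          / (h * ((a + 1) ^ 2 + 2 * h) * ((a - 1) ^ 2 + 2 * h))
      = (4 * (b * (2 * h + (a ^ 2 - 1)) - 2 * (2 * h) ^ 2)
            * (((a + 1) ^ 2 + 2 * h) * ((a - 1) ^ 2 + 2 * h))
          - 8 * (2 * h) * (2 * h - b) * ((a ^ 2 - 1) - 2 * h)
            * (((a + 1) ^ 2 + 2 * h) + ((a - 1) ^ 2 + 2 * h)))
        / (2 * h * (((a + 1) ^ 2 + 2 * h) * ((a - 1) ^ 2 + 2 * h)) ^ 2) := by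
    field_simp
    ring
  rw [key]
  apply div_neg_of_neg_of_pos _ (by positivity)
  have e1 : b * (2 * h + (a ^ 2 - 1)) < 0 :=
    mul_neg_of_neg_of_pos hb (by nlinarith)
  have t1 : 4 * (b * (2 * h + (a ^ 2 - 1)) - 2 * (2 * h) ^ 2)
      * (((a + 1) ^ 2 + 2 * h) * ((a - 1) ^ 2 + 2 * h)) < 0 :=
    mul_neg_of_neg_of_pos (by nlinarith) (mul_pos hPp hPm)
  have t2 : 0 ≤ 8 * (2 * h) * (2 * h - b) * ((a ^ 2 - 1) - 2 * h)
      * (((a + 1) ^ 2 + 2 * h) + ((a - 1) ^ 2 + 2 * h)) := by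
    apply mul_nonneg
    apply mul_nonneg
    apply mul_nonneg
    · positivity
    · nlinarith
    · nlinarith
    · positivity
  linarith

lemma M2_neg_far {a b h : ℝ} (ha : 1 < a) (hb : b < 0) (hhc : (a ^ 2 - 1) / 2 ≤ h) :
    M2 a b h < 0 := by
  have hc0 : (0:ℝ) < a ^ 2 - 1 := by nlinarith
  have hh : 0 < h := lt_of_lt_of_le (by linarith) hhc
  have hsp := S_pos hh
  have hPp : (0:ℝ) < (a + 1) ^ 2 + 2 * h := by positivity
  have hPm : (0:ℝ) < (a - 1) ^ 2 + 2 * h := by positivity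
  have ham : (0:ℝ) < a - 1 := by linarith
  unfold M2
  have harg : S h / (a + 1) < S h / (a - 1) :=
    div_lt_div_of_pos_left hsp ham (by linarith)
  have hA : Real.arctan (S h / (a + 1)) < Real.arctan (S h / (a - 1)) :=
    Real.arctan_strictMono harg
  have hnum : 4 * (b - 2 * h) * (2 * h - (a ^ 2 - 1)) ≤ 0 :=
    mul_nonpos_of_nonpos_of_nonneg (by nlinarith) (by linarith)
  have hfrac : 4 * (b - 2 * h) * (2 * h - (a ^ 2 - 1))
      / (S h * ((a + 1) ^ 2 + 2 * h) * ((a - 1) ^ 2 + 2 * h)) ≤ 0 :=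
    div_nonpos_of_nonpos_of_nonneg hnum (by positivity)
  have hpi := Real.pi_pos
  linarith

lemma M2_pos_near {a b : ℝ} (ha : 1 < a) (hb : b < 0) :
    ∃ h₀ : ℝ, 0 < h₀ ∧ h₀ < (a ^ 2 - 1) / 2 ∧ M2 a b h₀ > 0 := by
  have hpi := Real.pi_pos
  have hc0 : (0:ℝ) < a ^ 2 - 1 := by nlinarith
  have hap : (0:ℝ) < a + 1 := by linarith
  have ham : (0:ℝ) < a - 1 := by linarith
  set β : ℝ := (-b) * (a ^ 2 - 1) / (6 * Real.pi * (a + 1) ^ 4) with hβdef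
  have hβ : 0 < β := by
    apply div_pos (by nlinarith) (by positivity)
  set h₀ : ℝ := min ((a ^ 2 - 1) / 8) (β ^ 2 / 4) with hh₀def
  have hh₀pos : 0 < h₀ := lt_min (by linarith) (by positivity)
  have hh₀le : h₀ ≤ (a ^ 2 - 1) / 8 := min_le_left _ _
  have hh₀le2 : h₀ ≤ β ^ 2 / 4 := min_le_right _ _
  refine ⟨h₀, hh₀pos, by linarith, ?_⟩
  have hsp := S_pos hh₀pos
  have hsq := S_sq hh₀pos
  have hPp : (0:ℝ) < (a + 1) ^ 2 + 2 * h₀ := by positivity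
  have hPm : (0:ℝ) < (a - 1) ^ 2 + 2 * h₀ := by positivity
  -- s < β
  have hsβ : S h₀ < β := by
    have h1 : 2 * h₀ < β ^ 2 := by nlinarith
    have := Real.sqrt_lt_sqrt (by linarith : (0:ℝ) ≤ 2 * h₀) h1
    rwa [Real.sqrt_sq hβ.le] at this
  -- arctan bounds
  have hA1 : 0 < Real.arctan (S h₀ / (a + 1)) := by
    have := Real.arctan_strictMono (show (0:ℝ) < S h₀ / (a + 1) by positivity)
    simpa [Real.arctan_zero] using this
  have hA2 : Real.arctan (S h₀ / (a - 1)) < Real.pi / 2 := Real.arctan_lt_pi_div_two _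
  -- denominator bound
  have hPpb : (a + 1) ^ 2 + 2 * h₀ < 2 * (a + 1) ^ 2 := by nlinarith
  have hPmb : (a - 1) ^ 2 + 2 * h₀ < 2 * (a + 1) ^ 2 := by nlinarith
  have hD : S h₀ * ((a + 1) ^ 2 + 2 * h₀) * ((a - 1) ^ 2 + 2 * h₀)
      < β * (2 * (a + 1) ^ 2) * (2 * (a + 1) ^ 2) := by
    apply mul_lt_mul'' (mul_lt_mul'' hsβ hPpb hsp.le hPp.le) hPmb (by positivity) hPm.le
  have hβeq : 3 * Real.pi * (β * (2 * (a + 1) ^ 2) * (2 * (a + 1) ^ 2))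
      = 2 * (-b) * (a ^ 2 - 1) := by
    rw [hβdef]
    field_simp
    ring
  have hN : 2 * (-b) * (a ^ 2 - 1) < 4 * (2 * h₀ - b) * ((a ^ 2 - 1) - 2 * h₀) := by
    nlinarith [mul_pos hh₀pos (show (0:ℝ) < a ^ 2 - 1 - 2 * h₀ by linarith),
      mul_pos (show (0:ℝ) < -b by linarith) hh₀pos]
  have hDpos : 0 < S h₀ * ((a + 1) ^ 2 + 2 * h₀) * ((a - 1) ^ 2 + 2 * h₀) := by positivity
  have hfrac : 3 * Real.pi < 4 * (2 * h₀ - b) * ((a ^ 2 - 1) - 2 * h₀)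
      / (S h₀ * ((a + 1) ^ 2 + 2 * h₀) * ((a - 1) ^ 2 + 2 * h₀)) := by
    rw [lt_div_iff₀ hDpos]
    calc 3 * Real.pi * (S h₀ * ((a + 1) ^ 2 + 2 * h₀) * ((a - 1) ^ 2 + 2 * h₀))
        < 3 * Real.pi * (β * (2 * (a + 1) ^ 2) * (2 * (a + 1) ^ 2)) := by
          exact mul_lt_mul_of_pos_left hD (by positivity)
      _ = 2 * (-b) * (a ^ 2 - 1) := hβeq
      _ < 4 * (2 * h₀ - b) * ((a ^ 2 - 1) - 2 * h₀) := hN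
  unfold M2
  have hrw : 4 * (b - 2 * h₀) * (2 * h₀ - (a ^ 2 - 1))
      = 4 * (2 * h₀ - b) * ((a ^ 2 - 1) - 2 * h₀) := by ring
  rw [hrw]
  linarith

theorem melnikov_second_deriv_unique_zero (a b : ℝ) (ha : 1 < a) (hb : b < 0) :
    ∃ h₂ : ℝ, 0 < h₂ ∧ h₂ < (a ^ 2 - 1) / 2 ∧
      deriv (deriv (Mel a b)) h₂ = 0 ∧
      (∀ h : ℝ, 0 < h → h < h₂ → 0 < deriv (deriv (Mel a b)) h) ∧
      (∀ h : ℝ, h₂ < h → deriv (deriv (Mel a b)) h < 0) ∧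
      (∀ h : ℝ, 0 < h → deriv (deriv (Mel a b)) h = 0 → h = h₂) := by
  have hc0 : (0:ℝ) < a ^ 2 - 1 := by nlinarith
  set half : ℝ := (a ^ 2 - 1) / 2 with hhalf
  have hhalfpos : 0 < half := by positivity
  obtain ⟨h₀, hh₀pos, hh₀lt, hh₀M2⟩ := M2_pos_near ha hb
  have cont : ContinuousOn (M2 a b) (Set.Ioc 0 half) := fun x hx =>
    ((hasDerivAt_M2 ha hx.1).continuousAt).continuousWithinAt
  have anti : StrictAntiOn (M2 a b) (Set.Ioc 0 half) := by
    apply strictAntiOn_of_deriv_neg (convex_Ioc 0 half) cont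
    intro x hx
    rw [interior_Ioc] at hx
    rw [(hasDerivAt_M2 ha hx.1).deriv]
    exact M3_neg ha hb hx.1 hx.2.le
  have hnegend : M2 a b half < 0 := M2_neg_far ha hb le_rfl
  have hsub : Set.Icc h₀ half ⊆ Set.Ioc 0 half := fun x hx => ⟨lt_of_lt_of_le hh₀pos hx.1, hx.2⟩
  have hIVT := intermediate_value_Icc' (le_of_lt hh₀lt) (cont.mono hsub)
  obtain ⟨h₂, hmem, hz⟩ := hIVT ⟨hnegend.le, hh₀M2.le⟩
  have hh₂pos : 0 < h₂ := lt_of_lt_of_le hh₀pos hmem.1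
  have hh₂lt : h₂ < half := by
    rcases lt_or_eq_of_le hmem.2 with h | h
    · exact h
    · exfalso; rw [h] at hz; exact absurd hz (ne_of_lt hnegend)
  have hh₂mem : h₂ ∈ Set.Ioc 0 half := ⟨hh₂pos, hh₂lt.le⟩
  refine ⟨h₂, hh₂pos, hh₂lt, ?_, ?_, ?_, ?_⟩
  · rw [deriv2_Mel_eq ha hh₂pos]; exact hz
  · intro h hpos hlt
    rw [deriv2_Mel_eq ha hpos]
    have := anti ⟨hpos, by linarith⟩ hh₂mem hlt
    linarith [hz ▸ this]
  · intro h hlt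
    have hpos : 0 < h := lt_trans hh₂pos hlt
    rw [deriv2_Mel_eq ha hpos]
    rcases le_or_gt h half with hc | hc
    · have := anti hh₂mem ⟨hpos, hc⟩ hlt
      linarith [hz ▸ this]
    · exact M2_neg_far ha hb hc.le
  · intro h hpos hzero
    rw [deriv2_Mel_eq ha hpos] at hzero
    by_contra hne
    rcases lt_or_gt_of_ne hne with hlt | hgt
    · have := anti ⟨hpos, by linarith⟩ hh₂mem hlt
      rw [hzero, hz] at this
      exact lt_irrefl _ this
    · rcases le_or_gt h half with hc | hc
      · have := anti hh₂mem ⟨hpos, hc⟩ hgt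
        rw [hzero, hz] at this
        exact lt_irrefl _ this
      · have := M2_neg_far ha hb hc.le
        rw [hzero] at this
        exact lt_irrefl _ this
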